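/- Fix B ≥ 4 and elevations θ_1,…,θ_m ∈ [0,π]. Let A_1 be the spherical-harmonic sensing matrix built from (θ_p, φ_p) and A_2 the Wigner-D sensing matrix built from (θ_p, φ_p, χ_p), for any azimuths φ_p and polarizations χ_p such that all columns of A_1 and A_2 are nonzero. Then min{μ(A_1), μ(A_2)} ≥ |Σ_{p=1}^m P_{B−1}(cos θ_p) P_{B−3}(cos θ_p)| / ((Σ_{p=1}^m P_{B−1}(cos θ_p)^2)^{1/2} · (Σ_{p=1}^m P_{B−3}(cos θ_p)^2)^{1/2}), where P_l := P_l^0 is the Legendre polynomial of degree l. -/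

import Mathlib

open scoped Real BigOperators

/-- Associated Legendre polynomial `P_l^k(x)` for integer order `k` (possibly negative). -/
noncomputable def assocLegendre (l : ℕ) (k : ℤ) (x : ℝ) : ℝ :=
  ((-1 : ℝ) ^ k / (2 ^ l * (Nat.factorial l : ℝ))) * (1 - x ^ 2) ^ ((k : ℝ) / 2) *
    iteratedDeriv (k + (l : ℤ)).toNat (fun y : ℝ => (y ^ 2 - 1) ^ l) x

/-- Normalization factor of spherical harmonics. -/
noncomputable def shNormFactor (l : ℕ) (k : ℤ) : ℝ :=
  Real.sqrt ((2 * (l : ℝ) + 1) / (4 * Real.pi) *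
    ((Nat.factorial ((l : ℤ) - k).toNat : ℝ) / (Nat.factorial ((l : ℤ) + k).toNat : ℝ)))

/-- Spherical harmonic `Y_l^k(θ,φ)`. -/
noncomputable def sphericalHarmonic (l : ℕ) (k : ℤ) (θ φ : ℝ) : ℂ :=
  ((shNormFactor l k * assocLegendre l k (Real.cos θ) : ℝ) : ℂ) *
    Complex.exp (Complex.I * (k : ℂ) * (φ : ℂ))

/-- Jacobi polynomial `P_α^{(ξ,λ)}(x)`. -/
noncomputable def jacobiP (a ξ lam : ℕ) (x : ℝ) : ℝ :=
  ((-1 : ℝ) ^ a / (2 ^ a * (Nat.factorial a : ℝ))) * (1 - x) ^ (-(ξ : ℤ)) *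
    (1 + x) ^ (-(lam : ℤ)) *
    iteratedDeriv a (fun y : ℝ => (1 - y) ^ ξ * (1 + y) ^ lam * (1 - y ^ 2) ^ a) x

/-- The coefficient `γ = α!(α+ξ+λ)!/((α+ξ)!(α+λ)!)`. -/
noncomputable def jacobiGamma (a ξ lam : ℕ) : ℝ :=
  ((Nat.factorial a : ℝ) * (Nat.factorial (a + ξ + lam) : ℝ)) /
    ((Nat.factorial (a + ξ) : ℝ) * (Nat.factorial (a + lam) : ℝ))

/-- Wigner d-function `d_l^{k,n}(cos θ)` (as a function of `θ`). -/
noncomputable def wignerd (l : ℕ) (k n : ℤ) (θ : ℝ) : ℝ :=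
  let ξ : ℕ := (k - n).natAbs
  let lam : ℕ := (k + n).natAbs
  let a : ℕ := l - (ξ + lam) / 2
  let ω : ℝ := if k ≤ n then 1 else (-1 : ℝ) ^ (n - k)
  ω * Real.sqrt (jacobiGamma a ξ lam) * (Real.sin (θ / 2)) ^ ξ * (Real.cos (θ / 2)) ^ lam *
    jacobiP a ξ lam (Real.cos θ)

/-- Wigner D-function `D_l^{k,n}(θ,φ,χ)`. -/
noncomputable def wignerD (l : ℕ) (k n : ℤ) (θ φ χ : ℝ) : ℂ :=
  ((Real.sqrt ((2 * (l : ℝ) + 1) / (8 * Real.pi ^ 2)) : ℝ) : ℂ) *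
    Complex.exp (-(Complex.I * (k : ℂ) * (φ : ℂ))) * ((wignerd l k n θ : ℝ) : ℂ) *
    Complex.exp (-(Complex.I * (n : ℂ) * (χ : ℂ)))

/-- Column index set for the spherical-harmonic sensing matrix: pairs `(l,k)`,
`0 ≤ l ≤ B-1`, `-l ≤ k ≤ l`.  It has `B^2` elements. -/
abbrev SHIndex (B : ℕ) := Σ l : Fin B, ↥(Set.Icc (-(l.1 : ℤ)) (l.1 : ℤ))

/-- Column index set for the Wigner-D sensing matrix: triples `(l,k,n)`,
`0 ≤ l ≤ B-1`, `-l ≤ k,n ≤ l`.  It has `B(2B-1)(2B+1)/3` elements. -/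
abbrev WDIndex (B : ℕ) :=
  Σ l : Fin B, ↥(Set.Icc (-(l.1 : ℤ)) (l.1 : ℤ)) × ↥(Set.Icc (-(l.1 : ℤ)) (l.1 : ℤ))

/-- The spherical-harmonic sensing matrix. -/
noncomputable def shMatrix {m : ℕ} (B : ℕ) (θ φ : Fin m → ℝ) :
    Matrix (Fin m) (SHIndex B) ℂ :=
  fun p i => sphericalHarmonic i.1.1 i.2.1 (θ p) (φ p)

/-- The Wigner-D sensing matrix. -/
noncomputable def wdMatrix {m : ℕ} (B : ℕ) (θ φ χ : Fin m → ℝ) :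
    Matrix (Fin m) (WDIndex B) ℂ :=
  fun p i => wignerD i.1.1 i.2.1.1 i.2.2.1 (θ p) (φ p) (χ p)

/-- Mutual coherence of a matrix: the supremum over pairs of distinct columns of the
normalized absolute inner product. -/
noncomputable def mutualCoherence {m : ℕ} {ι : Type*} (A : Matrix (Fin m) ι ℂ) : ℝ :=
  sSup {x : ℝ | ∃ i j : ι, i ≠ j ∧
    x = ‖∑ p, (starRingEnd ℂ) (A p i) * A p j‖ /
        (Real.sqrt (∑ p, Complex.normSq (A p i)) * Real.sqrt (∑ p, Complex.normSq (A p j)))}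



section Aux

lemma myCS {m : ℕ} (a b : Fin m → ℂ) :
    ‖∑ p, (starRingEnd ℂ) (a p) * b p‖ ≤
      Real.sqrt (∑ p, Complex.normSq (a p)) * Real.sqrt (∑ p, Complex.normSq (b p)) := by
  have h := @norm_inner_le_norm ℂ (EuclideanSpace ℂ (Fin m)) _ _ _
    ((WithLp.equiv 2 _).symm a) ((WithLp.equiv 2 _).symm b)
  simp only [PiLp.inner_apply, EuclideanSpace.norm_eq, RCLike.inner_apply] at h
  convert h using 2
  · rfl
  all_goals simp [Complex.normSq_eq_norm_sq, mul_comm]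

lemma iterD_cmul {n : ℕ} {f : ℝ → ℝ} (h : ContDiff ℝ n f) (c : ℝ) (x : ℝ) :
    iteratedDeriv n (fun y => c * f y) x = c * iteratedDeriv n f x := by
  simp only [iteratedDeriv_eq_iteratedFDeriv]
  have : (fun y => c * f y) = c • f := by funext y; simp [smul_eq_mul]
  rw [this, iteratedFDeriv_const_smul_apply h.contDiffAt]
  simp

lemma wignerd_zero (l : ℕ) (θ : ℝ) : wignerd l 0 0 θ = assocLegendre l 0 (Real.cos θ) := by
  have hcd : ContDiff ℝ l (fun y : ℝ => (y ^ 2 - 1) ^ l) :=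
    (((contDiff_id.pow 2).sub contDiff_const).pow l).of_le le_top
  have hfun : (fun y : ℝ => (1 - y ^ 2) ^ l)
      = fun y : ℝ => (-1 : ℝ) ^ l * (y ^ 2 - 1) ^ l := by
    funext y
    rw [← neg_pow, neg_sub]
  simp only [wignerd, jacobiGamma, jacobiP, assocLegendre, sub_zero, add_zero, Int.natAbs_zero,
    Nat.add_zero, Nat.zero_div, Nat.sub_zero, le_refl, if_true, pow_zero, one_mul, mul_one,
    zpow_zero, Nat.cast_zero, neg_zero, Int.toNat_natCast, zero_add, zero_div,
    Real.rpow_zero, hfun]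
  rw [iterD_cmul hcd]
  have h1 : ((Nat.factorial l : ℝ) * (Nat.factorial l : ℝ)) /
      ((Nat.factorial l : ℝ) * (Nat.factorial l : ℝ)) = 1 := by
    rw [div_self]; positivity
  rw [h1, Real.sqrt_one]
  have h2 : ((-1:ℝ) ^ l) * ((-1:ℝ) ^ l) = 1 := by
    rw [← pow_add]; exact Even.neg_one_pow ⟨l, (two_mul l).symm ▸ rfl⟩
  field_simp
  ring_nf
  simp [Real.rpow_zero, mul_comm l 2, pow_mul]

lemma shNorm_zero_pos (l : ℕ) : 0 < shNormFactor l 0 := by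
  unfold shNormFactor
  rw [Real.sqrt_pos]
  have : ((Nat.factorial (((l:ℤ) - 0).toNat) : ℝ) / (Nat.factorial (((l:ℤ) + 0).toNat) : ℝ)) = 1 := by
    rw [sub_zero, add_zero, div_self]
    exact_mod_cast (Nat.factorial_pos _).ne'
  rw [this, mul_one]
  have hπ := Real.pi_pos
  positivity

lemma sh_zero (l : ℕ) (θ φ : ℝ) :
    sphericalHarmonic l 0 θ φ =
      ((shNormFactor l 0 * assocLegendre l 0 (Real.cos θ) : ℝ) : ℂ) := by
  simp [sphericalHarmonic]

lemma wD_zero (l : ℕ) (θ φ χ : ℝ) :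
    wignerD l 0 0 θ φ χ =
      ((Real.sqrt ((2 * (l : ℝ) + 1) / (8 * Real.pi ^ 2)) *
        assocLegendre l 0 (Real.cos θ) : ℝ) : ℂ) := by
  simp [wignerD, wignerd_zero]

lemma coherence_ge {m : ℕ} {ι : Type*} (A : Matrix (Fin m) ι ℂ) (i j : ι) (hij : i ≠ j)
    (f g : Fin m → ℝ) (ci cj : ℝ) (hci : 0 < ci) (hcj : 0 < cj)
    (hi : ∀ p, A p i = ((ci * f p : ℝ) : ℂ)) (hj : ∀ p, A p j = ((cj * g p : ℝ) : ℂ)) :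
    mutualCoherence A ≥ |∑ p, f p * g p| /
      (Real.sqrt (∑ p, f p ^ 2) * Real.sqrt (∑ p, g p ^ 2)) := by
  have hbdd : BddAbove {x : ℝ | ∃ i j : ι, i ≠ j ∧
      x = ‖∑ p, (starRingEnd ℂ) (A p i) * A p j‖ /
        (Real.sqrt (∑ p, Complex.normSq (A p i)) * Real.sqrt (∑ p, Complex.normSq (A p j)))} := by
    refine ⟨1, ?_⟩
    rintro x ⟨i, j, -, rfl⟩
    refine div_le_one_of_le₀ ?_ (by positivity)
    exact myCS _ _
  have e1 : (∑ p, (starRingEnd ℂ) (A p i) * A p j)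
      = (((ci * cj) * ∑ p, f p * g p : ℝ) : ℂ) := by
    simp only [hi, hj, Complex.conj_ofReal]
    push_cast
    rw [Finset.mul_sum]
    exact Finset.sum_congr rfl fun p _ => by ring
  have e2 : (∑ p, Complex.normSq (A p i)) = ci ^ 2 * ∑ p, f p ^ 2 := by
    simp only [hi, Complex.normSq_ofReal, Finset.mul_sum]
    exact Finset.sum_congr rfl fun p _ => by ring
  have e3 : (∑ p, Complex.normSq (A p j)) = cj ^ 2 * ∑ p, g p ^ 2 := by
    simp only [hj, Complex.normSq_ofReal, Finset.mul_sum]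
    exact Finset.sum_congr rfl fun p _ => by ring
  have key : |∑ p, f p * g p| /
      (Real.sqrt (∑ p, f p ^ 2) * Real.sqrt (∑ p, g p ^ 2))
      = ‖∑ p, (starRingEnd ℂ) (A p i) * A p j‖ /
        (Real.sqrt (∑ p, Complex.normSq (A p i)) * Real.sqrt (∑ p, Complex.normSq (A p j))) := by
    rw [e1, e2, e3, Complex.norm_real, Real.norm_eq_abs, abs_mul, abs_of_pos (mul_pos hci hcj),
      Real.sqrt_mul (sq_nonneg ci), Real.sqrt_mul (sq_nonneg cj),
      Real.sqrt_sq hci.le, Real.sqrt_sq hcj.le]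
    rw [show ci * Real.sqrt (∑ p, f p ^ 2) * (cj * Real.sqrt (∑ p, g p ^ 2))
        = (ci * cj) * (Real.sqrt (∑ p, f p ^ 2) * Real.sqrt (∑ p, g p ^ 2)) by ring]
    rw [mul_div_mul_left _ _ (by positivity : ci * cj ≠ 0)]
  exact le_csSup hbdd ⟨i, j, hij, key⟩

end Aux

/-- the minimum of the mutual coherences of the spherical-harmonic and Wigner-D
sensing matrices is lower bounded via the Legendre polynomials of degrees `B-1` and `B-3`. -/
theorem min_coherence_lower_bound (B m : ℕ) (hB : 4 ≤ B)
    (θ φ χ : Fin m → ℝ)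
    (hθ : ∀ p, θ p ∈ Set.Icc 0 Real.pi) (hφ : ∀ p, φ p ∈ Set.Ico 0 (2 * Real.pi))
    (hχ : ∀ p, χ p ∈ Set.Ico 0 (2 * Real.pi))
    (hcols₁ : ∀ i : SHIndex B, ∃ p, shMatrix B θ φ p i ≠ 0)
    (hcols₂ : ∀ i : WDIndex B, ∃ p, wdMatrix B θ φ χ p i ≠ 0) :
    min (mutualCoherence (shMatrix B θ φ)) (mutualCoherence (wdMatrix B θ φ χ)) ≥
      |∑ p, assocLegendre (B - 1) 0 (Real.cos (θ p)) * assocLegendre (B - 3) 0 (Real.cos (θ p))| /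
        (Real.sqrt (∑ p, (assocLegendre (B - 1) 0 (Real.cos (θ p))) ^ 2) *
          Real.sqrt (∑ p, (assocLegendre (B - 3) 0 (Real.cos (θ p))) ^ 2)) :=  by
  have hB1 : B - 1 < B := by omega
  have hB3 : B - 3 < B := by omega
  have hne : (B - 1 : ℕ) ≠ (B - 3 : ℕ) := by omega
  have h0mem : ∀ l : ℕ, (0 : ℤ) ∈ Set.Icc (-(l : ℤ)) (l : ℤ) := fun l => by
    simp [Set.mem_Icc]
  set f : Fin m → ℝ := fun p => assocLegendre (B - 1) 0 (Real.cos (θ p)) with hf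
  set g : Fin m → ℝ := fun p => assocLegendre (B - 3) 0 (Real.cos (θ p)) with hg
  refine le_min ?_ ?_
  · -- spherical harmonic case
    refine coherence_ge (shMatrix B θ φ)
      ⟨⟨B - 1, hB1⟩, ⟨0, h0mem _⟩⟩ ⟨⟨B - 3, hB3⟩, ⟨0, h0mem _⟩⟩
      (fun h => hne (congrArg (fun x => x.1.1) h)) f g
      (shNormFactor (B - 1) 0) (shNormFactor (B - 3) 0)
      (shNorm_zero_pos _) (shNorm_zero_pos _) (fun p => ?_) (fun p => ?_)
    · exact sh_zero (B - 1) (θ p) (φ p)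
    · exact sh_zero (B - 3) (θ p) (φ p)
  · -- Wigner D case
    have hc : ∀ l : ℕ, 0 < Real.sqrt ((2 * (l : ℝ) + 1) / (8 * Real.pi ^ 2)) := fun l => by
      have hπ := Real.pi_pos
      rw [Real.sqrt_pos]
      positivity
    refine coherence_ge (wdMatrix B θ φ χ)
      ⟨⟨B - 1, hB1⟩, (⟨0, h0mem _⟩, ⟨0, h0mem _⟩)⟩ ⟨⟨B - 3, hB3⟩, (⟨0, h0mem _⟩, ⟨0, h0mem _⟩)⟩
      (fun h => hne (congrArg (fun x => x.1.1) h)) f g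
      (Real.sqrt ((2 * ((B - 1 : ℕ) : ℝ) + 1) / (8 * Real.pi ^ 2)))
      (Real.sqrt ((2 * ((B - 3 : ℕ) : ℝ) + 1) / (8 * Real.pi ^ 2)))
      (hc _) (hc _) (fun p => ?_) (fun p => ?_)
    · exact wD_zero (B - 1) (θ p) (φ p) (χ p)
    · exact wD_zero (B - 3) (θ p) (φ p) (χ p)
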